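/- For n×n max-plus matrices A (entries in ℝ ∪ {-∞}), B (entries in ℝ ∪ {+∞}) and a vector x with entries in ℝ ∪ {-∞}: the pair of inequalities A ⊗ x ⪯ x and x ⪯ B ⊙ x holds if and only if (A ⊕ B^♯) ⊗ x ⪯ x, where B^♯ is the negated transpose of B, ⊕ is entrywise max, ⊗ is max-plus matrix-vector product, and ⊙ is min-plus (dual) matrix-vector product. -/

import Mathlib

/-- Dual multiplication `⊙` on `ℝ̄ = ℝ ∪ {±∞}`: like `+`, but `+∞` is absorbing. -/
noncomputable def dualAdd (a b : EReal) : EReal := if a = ⊤ ∨ b = ⊤ then ⊤ else a + b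

lemma neg_add_le_iff (b : ℝ) (y z : EReal) : -(b : EReal) + y ≤ z ↔ y ≤ (b : EReal) + z := by
  rw [add_comm, ← sub_eq_add_neg,
    EReal.sub_le_iff_le_add (.inl (EReal.coe_ne_bot b)) (.inl (EReal.coe_ne_top b)),
    add_comm]

/-- For max-plus matrices `A` (entries in `ℝ ∪ {-∞}`), `B` (entries in `ℝ ∪ {+∞}`) and a
vector `x` over `ℝ ∪ {-∞}`: `A ⊗ x ⪯ x` and `x ⪯ B ⊙ x` iff `(A ⊕ B♯) ⊗ x ⪯ x`. -/
theorem stmt6 {n : ℕ} (A B : Matrix (Fin n) (Fin n) EReal) (x : Fin n → EReal)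
    (hA : ∀ i j, A i j ≠ ⊤) (hB : ∀ i j, B i j ≠ ⊥) (hx : ∀ i, x i ≠ ⊤) :
    ((∀ i, (⨆ j, A i j + x j) ≤ x i) ∧ (∀ i, x i ≤ ⨅ j, dualAdd (B i j) (x j))) ↔
      (∀ i, (⨆ j, max (A i j) (-(B j i)) + x j) ≤ x i) := by
  constructor
  · rintro ⟨h1, h2⟩ i
    refine iSup_le fun j => ?_
    rw [← max_add_add_right]
    refine max_le (le_trans (le_iSup (fun j => A i j + x j) j) (h1 i)) ?_
    by_cases hT : B j i = ⊤
    · simp [hT]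
    · obtain ⟨b, hb⟩ : ∃ b : ℝ, B j i = b := ⟨_, (EReal.coe_toReal hT (hB j i)).symm⟩
      rw [hb, neg_add_le_iff]
      have := le_trans (h2 j) (iInf_le _ i)
      rwa [dualAdd, if_neg (by simp [hT, hx i]), hb] at this
  · intro h
    constructor
    · intro i
      refine iSup_le fun j => le_trans ?_ (le_trans (le_iSup _ j) (h i))
      exact add_le_add_left (le_max_left _ _) _
    · intro i
      refine le_iInf fun j => ?_
      unfold dualAdd
      by_cases hT : B i j = ⊤ ∨ x j = ⊤
      · simp [hT]
      · rw [if_neg hT]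
        push_neg at hT
        obtain ⟨b, hb⟩ : ∃ b : ℝ, B i j = b := ⟨_, (EReal.coe_toReal hT.1 (hB i j)).symm⟩
        rw [hb, ← neg_add_le_iff]
        refine le_trans ?_ (le_trans (le_iSup _ i) (h j))
        rw [hb]
        exact add_le_add_left (le_max_right _ _) _
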